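/- arXiv:1910.06435 — 6 statements merged into one kernel-verified Lean document; each statement's English description precedes it below -/
import Mathlib

section
/- For any finite graph G = (V,E), there exists a family of at most |E|+1 clusterings such that for every λ ∈ (0,1), the family contains a clustering minimizing the LambdaPrime objective at λ. -/
open Finset

def SimpleGraph.cutVal {V : Type*} [Fintype V] [DecidableEq V]
    (G : SimpleGraph V) [DecidableRel G.Adj] (S : Finset V) : ℕ :=
  ((univ : Finset (V × V)).filter
    (fun p => G.Adj p.1 p.2 ∧ p.1 ∈ S ∧ p.2 ∉ S)).card

noncomputable def lamPrime {V : Type*} [Fintype V] [DecidableEq V]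
    (G : SimpleGraph V) [DecidableRel G.Adj]
    (C : Finpartition (univ : Finset V)) (lam : ℝ) : ℝ :=
  ∑ S ∈ C.parts, ((G.cutVal S : ℝ) / 2 + lam * (S.card.choose 2))

section Aux

variable {V : Type*} [Fintype V] [DecidableEq V]
    (G : SimpleGraph V) [DecidableRel G.Adj]

/-- The graph consisting of the cut edges of `G` w.r.t. the partition `C`. -/
def cutGraph (C : Finpartition (univ : Finset V)) : SimpleGraph V where
  Adj u v := G.Adj u v ∧ C.part u ≠ C.part v
  symm := ⟨fun u v ⟨h, h'⟩ => ⟨h.symm, h'.symm⟩⟩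
  loopless := ⟨fun u ⟨h, _⟩ => G.irrefl h⟩

instance {C : Finpartition (univ : Finset V)} :
    DecidableRel (cutGraph G C).Adj := fun u v =>
  inferInstanceAs (Decidable (G.Adj u v ∧ C.part u ≠ C.part v))

lemma sum_cutVal (C : Finpartition (univ : Finset V)) :
    ∑ S ∈ C.parts, G.cutVal S = 2 * (cutGraph G C).edgeFinset.card := by
  classical
  rw [SimpleGraph.two_mul_card_edgeFinset]
  unfold SimpleGraph.cutVal
  rw [← Finset.card_biUnion]
  · congr 1
    ext ⟨u, v⟩
    simp only [Finset.mem_biUnion, Finset.mem_filter, Finset.mem_univ, true_and]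
    constructor
    · rintro ⟨S, hS, hadj, huS, hvS⟩
      refine ⟨hadj, ?_⟩
      rw [C.part_eq_of_mem hS huS]
      intro h
      exact hvS (h ▸ C.mem_part (Finset.mem_univ v))
    · rintro ⟨hadj, hne⟩
      refine ⟨C.part u, C.part_mem.2 (Finset.mem_univ u), hadj,
        C.mem_part (Finset.mem_univ u), fun hv => ?_⟩
      exact hne (C.part_eq_of_mem (C.part_mem.2 (Finset.mem_univ u)) hv).symm
  · intro S hS T hT hST
    simp only [Finset.disjoint_left, Finset.mem_filter]
    rintro ⟨u, v⟩ ⟨-, -, huS, -⟩ ⟨-, -, huT, -⟩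
    exact hST (C.eq_of_mem_parts hS hT huS huT)

lemma lamPrime_eq (C : Finpartition (univ : Finset V)) (lam : ℝ) :
    lamPrime G C lam = ((cutGraph G C).edgeFinset.card : ℝ)
      + lam * ∑ S ∈ C.parts, (S.card.choose 2 : ℝ) := by
  unfold lamPrime
  rw [Finset.sum_add_distrib, ← Finset.sum_div, Finset.mul_sum]
  congr 1
  rw [← Nat.cast_sum, sum_cutVal]
  push_cast
  ring

lemma cutGraph_le (C : Finpartition (univ : Finset V)) : cutGraph G C ≤ G :=
  fun _ _ h => h.1

end Aux

/-- There is a family of at most `|E| + 1` clusterings containing, for every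
`λ ∈ (0,1)`, a clustering minimizing the LambdaPrime objective at `λ`. -/
theorem exists_small_optimal_family
    {V : Type*} [Fintype V] [DecidableEq V]
    (G : SimpleGraph V) [DecidableRel G.Adj] :
    ∃ F : Finset (Finpartition (univ : Finset V)),
      F.card ≤ G.edgeFinset.card + 1 ∧
      ∀ lam ∈ Set.Ioo (0 : ℝ) 1, ∃ C ∈ F,
        ∀ C' : Finpartition (univ : Finset V),
          lamPrime G C lam ≤ lamPrime G C' lam := by
  classical
  set key : Finpartition (univ : Finset V) → ℕ :=
    fun C => (cutGraph G C).edgeFinset.card with hkey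
  set b : Finpartition (univ : Finset V) → ℝ :=
    fun C => ∑ S ∈ C.parts, (S.card.choose 2 : ℝ) with hb
  -- for each k, pick a partition with key k minimizing b, if any
  have hchoice : ∀ k : ℕ, (∃ C, key C = k) →
      ∃ C, key C = k ∧ ∀ C', key C' = k → b C ≤ b C' := by
    intro k hk
    obtain ⟨C₀, hC₀⟩ := hk
    obtain ⟨C, hC, hmin⟩ := Finset.exists_min_image
      ((univ : Finset (Finpartition (univ : Finset V))).filter fun C => key C = k)
      b ⟨C₀, by simp [hC₀]⟩
    simp only [Finset.mem_filter, Finset.mem_univ, true_and] at hC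
    exact ⟨C, hC, fun C' hC' => hmin C' (by simp [hC'])⟩
  let g : ℕ → Finpartition (univ : Finset V) := fun k =>
    if h : ∃ C, key C = k then (hchoice k h).choose else ⊥
  refine ⟨(Finset.range (G.edgeFinset.card + 1)).image g, ?_, ?_⟩
  · exact (Finset.card_image_le).trans (by simp)
  · rintro lam ⟨hlam0, _⟩
    -- global minimizer at lam
    obtain ⟨C', -, hC'min⟩ := Finset.exists_min_image
      (univ : Finset (Finpartition (univ : Finset V)))
      (fun C => lamPrime G C lam) ⟨⊥, Finset.mem_univ _⟩
    have hkle : key C' ≤ G.edgeFinset.card :=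
      Finset.card_le_card (SimpleGraph.edgeFinset_mono (cutGraph_le G C'))
    have hex : ∃ C, key C = key C' := ⟨C', rfl⟩
    have hg : g (key C') = (hchoice _ hex).choose := dif_pos hex
    obtain ⟨hgk, hgb⟩ := (hchoice _ hex).choose_spec
    refine ⟨g (key C'), Finset.mem_image.2 ⟨key C',
      Finset.mem_range.2 (Nat.lt_succ_of_le hkle), rfl⟩, fun C'' => ?_⟩
    have h1 : lamPrime G (g (key C')) lam ≤ lamPrime G C' lam := by
      rw [lamPrime_eq, lamPrime_eq, hg]
      have h2 : (#(cutGraph G (hchoice _ hex).choose).edgeFinset : ℝ)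
          = (#(cutGraph G C').edgeFinset : ℝ) := by exact_mod_cast hgk
      have hble : (∑ S ∈ (hchoice _ hex).choose.parts, ((#S).choose 2 : ℝ))
          ≤ ∑ S ∈ C'.parts, ((#S).choose 2 : ℝ) := hgb C' rfl
      rw [h2]
      have := mul_le_mul_of_nonneg_left hble hlam0.le
      linarith
    exact h1.trans (hC'min C'' (Finset.mem_univ _))
end

section
/- Let f(x,λ) = P(x) + λN(x) with P, N ≥ 0 over a feasible set F, let ε > 0, and suppose solutions x^1,...,x^{q+1} are optimal at λ_1 < λ_2 < ... < λ_{q+1} where λ_{k} = (1+ε)^2 λ_{k−1} for 2 ≤ k ≤ q. Then for any λ ∈ [λ_1, (1+ε)λ_q], some x^k is a (1+ε)-approximate solution at λ. -/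
/-- Given optimal solutions `x 1, …, x (q+1)` at geometrically spaced parameters
`lam 1 < ⋯ < lam (q+1)` with ratio `(1+ε)²` between consecutive parameters up to
index `q`, every `μ ∈ [lam 1, (1+ε)·lam q]` admits some `x k` that is a
`(1+ε)`-approximate solution at `μ`. -/
theorem geometric_family_covers {X : Type*} (F : Set X) (P N : X → ℝ)
    (hP : ∀ z ∈ F, 0 ≤ P z) (hN : ∀ z ∈ F, 0 ≤ N z)
    (ε : ℝ) (hε : 0 < ε) (q : ℕ) (hq : 1 ≤ q)
    (lam : ℕ → ℝ) (x : ℕ → X)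
    (hpos : 0 < lam 1)
    (hmono : ∀ k, 1 ≤ k → k ≤ q → lam k < lam (k + 1))
    (hgeom : ∀ k, 2 ≤ k → k ≤ q → lam k = (1 + ε) ^ 2 * lam (k - 1))
    (hmem : ∀ k, 1 ≤ k → k ≤ q + 1 → x k ∈ F)
    (hopt : ∀ k, 1 ≤ k → k ≤ q + 1 →
      ∀ y ∈ F, P (x k) + lam k * N (x k) ≤ P y + lam k * N y) :
    ∀ μ ∈ Set.Icc (lam 1) ((1 + ε) * lam q),
      ∃ k, 1 ≤ k ∧ k ≤ q + 1 ∧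
        ∀ y ∈ F, P (x k) + μ * N (x k) ≤ (1 + ε) * (P y + μ * N y) := by
  classical
  intro μ hμ
  obtain ⟨hμ1, hμ2⟩ := hμ
  have hε1 : (0:ℝ) < 1 + ε := by linarith
  have hμpos : 0 < μ := lt_of_lt_of_le hpos hμ1
  set Pr : ℕ → Prop := fun j => lam j ≤ (1 + ε) * μ with hPr
  have hPr1 : Pr 1 := by
    show lam 1 ≤ (1 + ε) * μ
    nlinarith
  set k := Nat.findGreatest Pr q with hkdef
  have hk1 : 1 ≤ k := Nat.le_findGreatest hq hPr1
  have hkq : k ≤ q := Nat.findGreatest_le q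
  have hkspec : lam k ≤ (1 + ε) * μ := Nat.findGreatest_spec hq hPr1
  have hup : μ ≤ (1 + ε) * lam k := by
    rcases eq_or_lt_of_le hkq with he | hl
    · rw [he]; exact hμ2
    · have hnot : ¬ Pr (k + 1) := Nat.findGreatest_is_greatest (show Nat.findGreatest Pr q < k + 1 by omega) (by omega)
      have h1 : (1 + ε) * μ < lam (k + 1) := lt_of_not_ge hnot
      have hg := hgeom (k + 1) (by omega) (by omega)
      simp only [Nat.add_sub_cancel] at hg
      nlinarith
  refine ⟨k, hk1, by omega, ?_⟩
  intro y hy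
  have hxk : x k ∈ F := hmem k hk1 (by omega)
  have hPx := hP _ hxk
  have hNx := hN _ hxk
  have hPy := hP _ hy
  have hNy := hN _ hy
  have hop := hopt k hk1 (by omega) y hy
  rcases le_total (lam k) μ with h | h
  · nlinarith [mul_le_mul_of_nonneg_right hup hNx,
      mul_le_mul_of_nonneg_left hop hε1.le,
      mul_le_mul_of_nonneg_left (mul_le_mul_of_nonneg_right h hNy) hε1.le,
      mul_nonneg hε.le hPx]
  · nlinarith [mul_le_mul_of_nonneg_right h hNx,
      mul_le_mul_of_nonneg_right hkspec hNy,
      mul_nonneg hε.le hPy]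
end

section
/- For any graph G, if λ ≤ λ* where λ* is the scaled sparsest cut value, then the clustering placing all nodes in a single cluster minimizes the LambdaPrime objective at λ. -/
open Finset

/-- If `λ` is at most the scaled sparsest cut value, then the clustering placing
all nodes in a single cluster minimizes the LambdaPrime objective at `λ`. -/
theorem indiscrete_optimal_of_le_sparsest_cut
    {V : Type*} [Fintype V] [DecidableEq V] [Nonempty V]
    (G : SimpleGraph V) [DecidableRel G.Adj] (lam : ℝ)
    (hlam : ∀ S : Finset V, S.Nonempty → S ≠ univ →
      lam ≤ (G.cutVal S : ℝ) / (S.card * (univ \ S).card)) :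
    ∀ C : Finpartition (univ : Finset V),
      lamPrime G (Finpartition.indiscrete
        (by simpa using (univ_nonempty (α := V)).ne_empty)) lam ≤
        lamPrime G C lam := by
  intro C
  classical
  set n := Fintype.card V with hn
  have hind : lamPrime G (Finpartition.indiscrete
      (by simpa using (univ_nonempty (α := V)).ne_empty)) lam
      = lam * (n.choose 2) := by
    have hc : G.cutVal (univ : Finset V) = 0 := by
      simp [SimpleGraph.cutVal]
    simp [lamPrime, Finpartition.indiscrete, hc, Finset.card_univ, hn]
  rw [hind, lamPrime]
  have hsumcard : ∑ S ∈ C.parts, (S.card : ℝ) = n := by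
    norm_cast
    simpa using C.sum_card_parts
  have hsum : lam * (n.choose 2 : ℝ)
      = ∑ S ∈ C.parts, lam * ((S.card : ℝ) * (n - 1) / 2) := by
    rw [← Finset.mul_sum, ← Finset.sum_div, ← Finset.sum_mul, hsumcard,
      Nat.cast_choose_two]
  rw [hsum]
  apply Finset.sum_le_sum
  intro S hS
  have hSsub : S ⊆ univ := Finset.subset_univ S
  have hcardsd : ((univ \ S).card : ℝ) = (n : ℝ) - S.card := by
    rw [Finset.card_sdiff_of_subset hSsub, Finset.card_univ]
    have := Finset.card_le_card hSsub
    rw [Finset.card_univ] at this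
    push_cast [Nat.cast_sub this]
    ring
  have key : lam * ((S.card : ℝ) * ((univ \ S).card : ℝ)) ≤ (G.cutVal S : ℝ) := by
    by_cases hU : S = univ
    · have : ((univ \ S).card : ℝ) = 0 := by simp [hU]
      rw [this]
      simpa using (Nat.cast_nonneg (G.cutVal S) : (0:ℝ) ≤ _)
    · have hne : S.Nonempty := C.nonempty_of_mem_parts hS
      have h1 : (0:ℝ) < S.card := by exact_mod_cast Finset.card_pos.mpr hne
      have h2 : (0:ℝ) < (univ \ S).card := by
        have : (univ \ S).Nonempty := by
          rw [Finset.sdiff_nonempty]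
          intro h
          exact hU (Finset.univ_subset_iff.mp h)
        exact_mod_cast Finset.card_pos.mpr this
      have hd : (0:ℝ) < (S.card : ℝ) * ((univ \ S).card : ℝ) := mul_pos h1 h2
      have := hlam S hne hU
      calc lam * ((S.card : ℝ) * ((univ \ S).card : ℝ))
          ≤ ((G.cutVal S : ℝ) / ((S.card : ℝ) * ((univ \ S).card : ℝ)))
            * ((S.card : ℝ) * ((univ \ S).card : ℝ)) := by
            exact mul_le_mul_of_nonneg_right this hd.le
        _ = (G.cutVal S : ℝ) := div_mul_cancel₀ _ hd.ne'
  rw [hcardsd] at key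
  have hchoose : ((S.card.choose 2 : ℕ) : ℝ) = S.card * ((S.card : ℝ) - 1) / 2 := by
    exact_mod_cast Nat.cast_choose_two (K := ℝ) S.card
  rw [hchoose]
  nlinarith [key]
end

section
/- Define LP(λ) = min over positive integers t of (n/t)(1 + λ·binom(t,2)) and g(λ) = n(√(2λ) − λ/2). Then for n = 2^k with k ≥ 3 and every λ ∈ [8/n², 1/2], g(λ) ≤ LP(λ) ≤ √2·g(λ). -/
/-- The LambdaPrime LP relaxation value on the ring graph with `n` nodes:
`LP(λ) = min_{t ∈ ℕ, t ≥ 1} (n/t)(1 + λ·binom(t,2))`. -/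
noncomputable def ringLP (n : ℕ) (lam : ℝ) : ℝ :=
  sInf {y : ℝ | ∃ t : ℕ, 1 ≤ t ∧ y = ((n : ℝ) / t) * (1 + lam * (t.choose 2))}

/-- For `n = 2^k`, `k ≥ 3`, and `λ ∈ [8/n², 1/2]`,
`g(λ) ≤ LP(λ) ≤ √2·g(λ)` where `g(λ) = n(√(2λ) − λ/2)`. -/
theorem ringLP_between_g_and_sqrt2_g (n k : ℕ) (hn : n = 2 ^ k) (hk : 3 ≤ k)
    (lam : ℝ) (hlam : lam ∈ Set.Icc ((8 : ℝ) / (n : ℝ) ^ 2) (1 / 2)) :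
    (n : ℝ) * (Real.sqrt (2 * lam) - lam / 2) ≤ ringLP n lam ∧
      ringLP n lam ≤ Real.sqrt 2 * ((n : ℝ) * (Real.sqrt (2 * lam) - lam / 2)) := by
  obtain ⟨hl, hu⟩ := hlam
  have hnpos : (0:ℝ) < n := by
    have : 0 < n := by rw [hn]; positivity
    exact_mod_cast this
  have hlampos : 0 < lam := lt_of_lt_of_le (by positivity) hl
  set u : ℝ := Real.sqrt (lam / 2) with hu_def
  have hu2 : u ^ 2 = lam / 2 := Real.sq_sqrt (by positivity)
  have hupos : 0 < u := Real.sqrt_pos.mpr (by positivity)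
  have huhalf : u ≤ 1 / 2 := by nlinarith [hu2, hupos]
  have hsqrt2lam : Real.sqrt (2 * lam) = 2 * u := by
    rw [show 2 * lam = (2 * u) ^ 2 by nlinarith]
    exact Real.sqrt_sq (by positivity)
  set b : ℝ := Real.sqrt 2 with hb_def
  have hb2 : b ^ 2 = 2 := Real.sq_sqrt (by norm_num)
  have hbpos : 0 < b := Real.sqrt_pos.mpr (by norm_num)
  have hb43 : (4:ℝ)/3 ≤ b := by nlinarith [hb2, hbpos]
  have hlam_u : lam = 2 * u ^ 2 := by rw [hu2]; ring
  clear_value u b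
  clear hn hk hl hu hu_def hb_def hlampos
  -- lower bound for every member of the set
  have hbd : ∀ y ∈ {y : ℝ | ∃ t : ℕ, 1 ≤ t ∧
      y = ((n : ℝ) / t) * (1 + lam * (t.choose 2))},
      (n : ℝ) * (Real.sqrt (2 * lam) - lam / 2) ≤ y := by
    rintro y ⟨t, ht1, rfl⟩
    have ht1' : (1:ℝ) ≤ (t:ℝ) := by exact_mod_cast ht1
    have htpos : (0:ℝ) < (t:ℝ) := by linarith
    rw [hsqrt2lam, Nat.cast_choose_two, div_mul_eq_mul_div, le_div_iff₀ htpos]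
    have hkey : (0:ℝ) ≤ ((t:ℝ) * u - 1) ^ 2 := sq_nonneg _
    rw [hlam_u]
    nlinarith [mul_nonneg hnpos.le hkey]
  have hne : {y : ℝ | ∃ t : ℕ, 1 ≤ t ∧
      y = ((n : ℝ) / t) * (1 + lam * (t.choose 2))}.Nonempty :=
    ⟨((n : ℝ) / 1) * (1 + lam * ((1:ℕ).choose 2)), 1, le_refl 1, by norm_num⟩
  have hbdd : BddBelow {y : ℝ | ∃ t : ℕ, 1 ≤ t ∧
      y = ((n : ℝ) / t) * (1 + lam * (t.choose 2))} :=
    ⟨(n : ℝ) * (Real.sqrt (2 * lam) - lam / 2), hbd⟩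
  constructor
  · exact le_csInf hne hbd
  · -- upper bound: take t = ⌈1/u⌉
    have hinv2 : (2:ℝ) ≤ 1/u := by
      rw [le_div_iff₀ hupos]; linarith
    obtain ⟨t, ht1, htge, htlt⟩ : ∃ t : ℕ, 1 ≤ t ∧ (1:ℝ)/u ≤ (t:ℝ) ∧ (t:ℝ) < 1/u + 1 :=
      ⟨⌈(1:ℝ)/u⌉₊, Nat.one_le_ceil_iff.mpr (by linarith), Nat.le_ceil _,
        Nat.ceil_lt_add_one (by linarith)⟩
    have htpos : (0:ℝ) < (t:ℝ) := by linarith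
    have hmem : ((n : ℝ) / t) * (1 + lam * (t.choose 2)) ∈ {y : ℝ | ∃ t : ℕ, 1 ≤ t ∧
        y = ((n : ℝ) / t) * (1 + lam * (t.choose 2))} := ⟨t, ht1, rfl⟩
    refine le_trans (csInf_le hbdd hmem) ?_
    rw [hsqrt2lam, Nat.cast_choose_two, div_mul_eq_mul_div, div_le_iff₀ htpos]
    have h1 : (1:ℝ) ≤ u * t := by
      have := mul_le_mul_of_nonneg_left htge hupos.le
      calc (1:ℝ) = u * (1/u) := by field_simp
        _ ≤ u * t := this
    have h2 : u * ((t:ℝ) - 1) ≤ 1 := by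
      have := mul_le_mul_of_nonneg_left htlt.le hupos.le
      have h3 : u * (1/u + 1) = 1 + u := by field_simp
      nlinarith
    have key : 1 + lam * ((t:ℝ) * ((t:ℝ)-1) / 2) ≤ b * (2*u - lam/2) * t := by
      rw [hlam_u]
      have hA : 1 + 2*u^2 * ((t:ℝ) * ((t:ℝ)-1) / 2) ≤ 2 * u * t := by
        have hp := mul_le_mul_of_nonneg_left h2 (mul_nonneg hupos.le htpos.le)
        nlinarith [hp, h1]
      have hB : 2 * u * t ≤ b * (2*u - u^2) * t := by
        have h4 : (2:ℝ) ≤ b * (2 - u) := by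
          nlinarith [mul_nonneg (by linarith : (0:ℝ) ≤ b - 4/3) (by linarith : (0:ℝ) ≤ 3/2 - u)]
        nlinarith [mul_le_mul_of_nonneg_right h4 (mul_nonneg hupos.le htpos.le)]
      calc 1 + 2*u^2 * ((t:ℝ) * ((t:ℝ)-1) / 2) ≤ 2 * u * t := hA
        _ ≤ b * (2*u - u^2) * t := hB
        _ = b * (2*u - 2*u^2/2) * t := by ring
    exact le_trans (mul_le_mul_of_nonneg_left key hnpos.le) (le_of_eq (by ring))
end

section
/- Let λ_i = 2/2^{2(k−i)} for i = 1,...,k−1 where n = 2^k. Then t_i := √(2/λ_i) = 2^{k−i} is a positive integer dividing n, and consequently the LP value LP(λ_i) = min over positive integers t of (n/t)(1+λ_i·binom(t,2)) equals g(λ_i) = n(√(2λ_i) − λ_i/2). -/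
/-- For `λ_i = 2/4^{k−i}` with `1 ≤ i ≤ k−1` and `n = 2^k`, the real minimizer
`t_i = √(2/λ_i)` equals the positive integer `2^{k−i}`, which divides `n`, and
consequently `LP(λ_i) = g(λ_i) = n(√(2λ_i) − λ_i/2)`. -/
theorem special_lambda_LP_eq_g (k i : ℕ) (hk : 3 ≤ k) (hi1 : 1 ≤ i) (hi2 : i ≤ k - 1) :
    Real.sqrt (2 / ((2 : ℝ) / 4 ^ (k - i))) = (2 : ℝ) ^ (k - i) ∧
    (2 ^ (k - i) : ℕ) ∣ 2 ^ k ∧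
    ringLP (2 ^ k) ((2 : ℝ) / 4 ^ (k - i)) =
      ((2 : ℝ) ^ k) * (Real.sqrt (2 * ((2 : ℝ) / 4 ^ (k - i))) -
        ((2 : ℝ) / 4 ^ (k - i)) / 2) := by
  set m := k - i with hmdef
  have hm1 : 1 ≤ m := by omega
  set T : ℝ := 2 ^ m with hTdef
  have hTpos : (0 : ℝ) < T := by positivity
  have h4 : (4 : ℝ) ^ m = T ^ 2 := by
    rw [hTdef, ← pow_mul, mul_comm, pow_mul]; norm_num
  have h4pos : (0 : ℝ) < (4 : ℝ) ^ m := by positivity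
  refine ⟨?_, pow_dvd_pow 2 (by omega), ?_⟩
  · rw [show (2 : ℝ) / (2 / 4 ^ m) = T ^ 2 by rw [← h4]; field_simp]
    exact Real.sqrt_sq hTpos.le
  · rw [show 2 * ((2 : ℝ) / 4 ^ m) = (2 / T) ^ 2 by
      rw [h4]; field_simp]
    rw [Real.sqrt_sq (by positivity)]
    set N : ℝ := (2 : ℝ) ^ k with hNdef
    have hNpos : (0 : ℝ) < N := by positivity
    set g : ℝ := N * (2 / T - 2 / 4 ^ m / 2) with hgdef
    have hcast : ((2 ^ k : ℕ) : ℝ) = N := by push_cast; rfl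
    -- lower bound
    have hlb : ∀ y ∈ {y : ℝ | ∃ t : ℕ, 1 ≤ t ∧
        y = (((2 ^ k : ℕ) : ℝ) / t) * (1 + (2 / 4 ^ m) * (t.choose 2))},
        g ≤ y := by
      rintro y ⟨t, ht, rfl⟩
      have htpos : (0 : ℝ) < (t : ℝ) := by exact_mod_cast ht
      rw [hcast, Nat.cast_choose_two]
      have hdiff : (N / t) * (1 + (2 / 4 ^ m) * ((t : ℝ) * ((t : ℝ) - 1) / 2)) - g
          = N * ((t : ℝ) - T) ^ 2 / ((t : ℝ) * T ^ 2) := by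
        rw [hgdef, h4]
        field_simp
        ring
      have hnn : (0 : ℝ) ≤ N * ((t : ℝ) - T) ^ 2 / ((t : ℝ) * T ^ 2) := by positivity
      linarith
    have hmem : g ∈ {y : ℝ | ∃ t : ℕ, 1 ≤ t ∧
        y = (((2 ^ k : ℕ) : ℝ) / t) * (1 + (2 / 4 ^ m) * (t.choose 2))} := by
      refine ⟨2 ^ m, Nat.one_le_two_pow, ?_⟩
      rw [hcast, Nat.cast_choose_two]
      have hc : ((2 ^ m : ℕ) : ℝ) = T := by push_cast; rfl
      rw [hc, hgdef, h4]
      field_simp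
      ring_nf
    unfold ringLP
    refine le_antisymm (csInf_le ⟨g, hlb⟩ hmem) (le_csInf ⟨g, hmem⟩ hlb)
end

section
/- Let λ_i = 2/4^{k−i} and t_i = 2^{k−i} as above, with λ ∈ [λ_i, 2λ_i). Then the LP objective with t = t_i satisfies (n/t_i)(1 + λ·binom(t_i,2)) ≤ √2·g(λ), where g(λ) = n(√(2λ) − λ/2). -/
set_option maxHeartbeats 1000000 in
/-- For `n = 2^k`, `1 ≤ i ≤ k−2`, `λ_i = 2/4^{k−i}`, `t_i = 2^{k−i}`, and
`λ ∈ [λ_i, 2λ_i)`, the LP objective with `t = t_i` satisfies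
`(n/t_i)(1 + λ·t_i(t_i−1)/2) ≤ √2·g(λ)` where `g(λ) = n(√(2λ) − λ/2)`. -/
theorem LP_objective_at_ti_le_sqrt2_g (k i : ℕ) (hk : 3 ≤ k)
    (hi1 : 1 ≤ i) (hi2 : i ≤ k - 2) (lam : ℝ)
    (hlam : lam ∈ Set.Ico ((2 : ℝ) / 4 ^ (k - i)) (2 * ((2 : ℝ) / 4 ^ (k - i)))) :
    ((2 : ℝ) ^ k / (2 : ℝ) ^ (k - i)) *
        (1 + lam * ((2 : ℝ) ^ (k - i) * ((2 : ℝ) ^ (k - i) - 1) / 2)) ≤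
      Real.sqrt 2 * (((2 : ℝ) ^ k) * (Real.sqrt (2 * lam) - lam / 2)) := by
  obtain ⟨h1, h2⟩ := hlam
  set t : ℝ := (2 : ℝ) ^ (k - i) with ht
  set n : ℝ := (2 : ℝ) ^ k with hn
  have hn0 : (0 : ℝ) < n := by positivity
  have hki : 2 ≤ k - i := by omega
  have ht4 : (4 : ℝ) ≤ t := by
    calc (4 : ℝ) = 2 ^ 2 := by norm_num
    _ ≤ 2 ^ (k - i) := pow_le_pow_right₀ (by norm_num) hki
  have htpos : (0 : ℝ) < t := by linarith
  have h4t : ((4 : ℝ)) ^ (k - i) = t ^ 2 := by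
    rw [ht, ← pow_mul, mul_comm, pow_mul]; norm_num
  have h4pos : (0 : ℝ) < (4 : ℝ) ^ (k - i) := by positivity
  have hlam0 : 0 < lam := lt_of_lt_of_le (by positivity) h1
  -- scalar bounds: 2 ≤ lam * t^2 and lam * t^2 < 4
  have hlow : 2 ≤ lam * t ^ 2 := by
    rw [div_le_iff₀ h4pos] at h1; rw [h4t] at h1; linarith
  have hhigh : lam * t ^ 2 < 4 := by
    have he : 2 * ((2:ℝ) / 4 ^ (k - i)) = 4 / 4 ^ (k - i) := by ring
    rw [he, lt_div_iff₀ h4pos, h4t] at h2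
    linarith
  set a : ℝ := Real.sqrt lam with haa
  have ha0 : 0 ≤ a := Real.sqrt_nonneg _
  have ha2 : a ^ 2 = lam := Real.sq_sqrt hlam0.le
  set b : ℝ := Real.sqrt 2 with hbb
  have hb0 : 0 ≤ b := Real.sqrt_nonneg _
  have hb2 : b ^ 2 = 2 := Real.sq_sqrt (by norm_num)
  have hb1 : 1 ≤ b := by nlinarith
  have hb32 : b ≤ 3 / 2 := by nlinarith
  have hb17 : 17 / 16 ≤ b := by nlinarith
  have hs : Real.sqrt (2 * lam) = b * a := by
    rw [hbb, haa, ← Real.sqrt_mul (by norm_num)]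
  rw [hs]
  clear_value t n a b
  clear ht hn haa hbb hs h1 h2 h4t h4pos hki hk hi1 hi2
  -- scalar facts about u = a * t
  have hu2 : 2 ≤ (a * t) ^ 2 := by nlinarith
  have hult : a * t < 2 := by nlinarith [mul_nonneg ha0 htpos.le]
  have hub : b ≤ a * t := by nlinarith [mul_nonneg ha0 htpos.le]
  have ha4 : 4 * a ≤ a * t := by
    have := mul_le_mul_of_nonneg_left ht4 ha0
    linarith
  have hat0 : 0 ≤ a * t := mul_nonneg ha0 htpos.le
  have e1 : 9 * (a * t) ^ 2 - 32 * (a * t) + 16 ≤ 0 := by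
    nlinarith [mul_nonneg (sub_nonneg.2 hub) (by linarith : (0:ℝ) ≤ 2 - a * t),
      mul_nonneg (sub_nonneg.2 hub) (by linarith : (0:ℝ) ≤ 14 - 9 * b)]
  have e23 : (b - 1) * a * (a * t) ≤ (a * t) ^ 2 / 8 := by
    nlinarith [mul_nonneg (mul_nonneg (by linarith : (0:ℝ) ≤ b - 1) hat0)
        (by linarith : (0:ℝ) ≤ a * t - 4 * a),
      mul_nonneg (by linarith : (0:ℝ) ≤ 3 / 2 - b) (sq_nonneg (a * t))]
  have hbbat : b ^ 2 * (a * t) = 2 * (a * t) := by rw [hb2]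
  have key : 1 + lam * (t * (t - 1) / 2) ≤ b * (b * a - lam / 2) * t := by
    rw [← ha2]
    nlinarith [e1, e23, hbbat]
  rw [div_mul_eq_mul_div, div_le_iff₀ htpos]
  nlinarith [mul_le_mul_of_nonneg_left key hn0.le]
end
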